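/- (Two-term coval description for 3×3 matrices) Let A be the 3×3 upper triangular complex matrix with diagonal entries λ₁, λ₂, λ₃ and strictly upper entries b₁ = A₁₂, b₂ = A₁₃, c₁ = A₂₃. Set t₁ := |b₁|² + |b₂|² + |c₁|², assume t₁ ≠ 0, set t₂ := |b₁|²(λ₁+λ₂) + |b₂|²(λ₁+λ₃) + |c₁|²(λ₂+λ₃) + conj(b₂)·b₁·c₁, and define the secondary value χ := (λ₁+λ₂+λ₃) − t₂/t₁. Then for all real numbers p and θ: det(p·I + Im(e^{-iθ}A)) = (p + Im(e^{-iθ}λ₁))·(p + Im(e^{-iθ}λ₂))·(p + Im(e^{-iθ}λ₃)) − (t₁/4)·(p + Im(e^{-iθ}χ)). -/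

import Mathlib

open Matrix Complex ComplexConjugate

set_option maxHeartbeats 4000000

/-- Two-term coval description for 3×3 matrices: for the upper triangular matrix
`A = !![λ₁,b₁,b₂; 0,λ₂,c₁; 0,0,λ₃]` with `t₁ = |b₁|²+|b₂|²+|c₁|² ≠ 0`,
`t₂ = |b₁|²(λ₁+λ₂)+|b₂|²(λ₁+λ₃)+|c₁|²(λ₂+λ₃)+conj(b₂)b₁c₁` and secondary value
`χ = (λ₁+λ₂+λ₃) − t₂/t₁`, for all real `p, θ`:
`det(pI + Im(e^{-iθ}A)) = p(λ₁)p(λ₂)p(λ₃) − (t₁/4)·p(χ)` in pedal coordinates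
`p(a) = p + Im(e^{-iθ}a)`. -/
theorem coval_three_by_three (lam₁ lam₂ lam₃ b₁ b₂ c₁ : ℂ)
    (A : Matrix (Fin 3) (Fin 3) ℂ)
    (hA : A = !![lam₁, b₁, b₂; 0, lam₂, c₁; 0, 0, lam₃])
    (t₁ : ℝ)
    (ht₁ : t₁ = ‖b₁‖ ^ 2 + ‖b₂‖ ^ 2 + ‖c₁‖ ^ 2)
    (ht₁ne : t₁ ≠ 0)
    (t₂ : ℂ)
    (ht₂ : t₂ = (‖b₁‖ ^ 2 : ℝ) * (lam₁ + lam₂) +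
      (‖b₂‖ ^ 2 : ℝ) * (lam₁ + lam₃) +
      (‖c₁‖ ^ 2 : ℝ) * (lam₂ + lam₃) + conj b₂ * b₁ * c₁)
    (χ : ℂ) (hχ : χ = lam₁ + lam₂ + lam₃ - t₂ / (t₁ : ℂ)) :
    ∀ p θ : ℝ,
      ((p : ℂ) • (1 : Matrix (Fin 3) (Fin 3) ℂ) +
          (2 * Complex.I)⁻¹ •
            (Complex.exp (-(θ : ℂ) * Complex.I) • A -
              (Complex.exp (-(θ : ℂ) * Complex.I) • A)ᴴ)).det =
        ((p + (Complex.exp (-(θ : ℂ) * Complex.I) * lam₁).im : ℝ) : ℂ) *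
            ((p + (Complex.exp (-(θ : ℂ) * Complex.I) * lam₂).im : ℝ) : ℂ) *
            ((p + (Complex.exp (-(θ : ℂ) * Complex.I) * lam₃).im : ℝ) : ℂ) -
          ((t₁ / 4 : ℝ) : ℂ) * ((p + (Complex.exp (-(θ : ℂ) * Complex.I) * χ).im : ℝ) : ℂ) := by
  intro p θ
  have hic : ∀ z : ℂ, ((z.im : ℝ) : ℂ) = (conj z - z) * Complex.I / 2 := by
    intro z
    have h := Complex.sub_conj z
    push_cast at h
    have h2 : Complex.I ^ 2 = -1 := Complex.I_sq
    linear_combination (Complex.I / 2) * h + (z.im : ℂ) * h2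
  have habs : ∀ z : ℂ, ((‖z‖ ^ 2 : ℝ) : ℂ) = z * conj z := by
    intro z
    rw [Complex.sq_norm]
    exact (Complex.mul_conj z).symm
  set E := Complex.exp (-(θ : ℂ) * Complex.I) with hE
  have hv : E * conj E = 1 := by
    rw [hE, Complex.mul_conj]
    norm_cast
    simp [Complex.normSq_eq_norm_sq, Complex.norm_exp]
  clear_value E
  have hI2 : Complex.I ^ 2 = -1 := Complex.I_sq
  have h2I : (2 * Complex.I)⁻¹ = -(Complex.I) / 2 := by
    rw [eq_div_iff (two_ne_zero' ℂ), inv_mul_eq_div, div_eq_iff (by simp [Complex.I_ne_zero] : (2 : ℂ) * Complex.I ≠ 0)]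
    linear_combination 2*hI2
  have ht₁C : (t₁ : ℂ) ≠ 0 := Complex.ofReal_ne_zero.mpr ht₁ne
  have hT : (t₁ : ℂ) = b₁ * conj b₁ + b₂ * conj b₂ + c₁ * conj c₁ := by
    rw [ht₁]
    push_cast [← habs]
    ring
  have hkey : ((t₁ / 4 : ℝ) : ℂ) * ((p + (E * χ).im : ℝ) : ℂ) =
      (c₁ * conj c₁ * ((p + (E * lam₁).im : ℝ) : ℂ) +
       b₂ * conj b₂ * ((p + (E * lam₂).im : ℝ) : ℂ) +
       b₁ * conj b₁ * ((p + (E * lam₃).im : ℝ) : ℂ) +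
       (E * (conj b₂ * b₁ * c₁) - conj E * (b₂ * conj b₁ * conj c₁)) * Complex.I / 2) / 4 := by
    rw [hχ, ht₂]
    simp only [habs]
    push_cast
    simp only [hic]
    simp only [map_add, map_sub, _root_.map_mul, map_div₀, Complex.conj_conj, Complex.conj_ofReal]
    field_simp
    rw [hT]
    ring
  rw [hA, hkey]
  simp only [Complex.ofReal_add, hic, map_add, map_sub, _root_.map_mul, map_zero,
    Complex.conj_conj, Complex.conj_ofReal]
  norm_num [Matrix.det_fin_three, Matrix.add_apply, Matrix.smul_apply, Matrix.sub_apply,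
    Matrix.conjTranspose_apply, Matrix.one_apply, Complex.star_def, Matrix.vecHead,
    Matrix.vecTail, Function.comp, h2I, Fin.ext_iff, map_sub, _root_.map_mul,
    Matrix.cons_val_zero, Matrix.cons_val_one, Matrix.cons_val_two]
  set_option maxRecDepth 4000 in
  linear_combination
    (Complex.I ^ 2 * (c₁ * conj c₁ * ((p : ℂ) + (conj E * conj lam₁ - E * lam₁) * Complex.I / 2) +
        b₂ * conj b₂ * ((p : ℂ) + (conj E * conj lam₂ - E * lam₂) * Complex.I / 2) +
        b₁ * conj b₁ * ((p : ℂ) + (conj E * conj lam₃ - E * lam₃) * Complex.I / 2)) / 4 +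
      Complex.I ^ 3 * (E * (b₁ * c₁ * conj b₂) - conj E * (b₂ * conj b₁ * conj c₁)) / 8) * hv +
    ((c₁ * conj c₁ * ((p : ℂ) + (conj E * conj lam₁ - E * lam₁) * Complex.I / 2) +
        b₂ * conj b₂ * ((p : ℂ) + (conj E * conj lam₂ - E * lam₂) * Complex.I / 2) +
        b₁ * conj b₁ * ((p : ℂ) + (conj E * conj lam₃ - E * lam₃) * Complex.I / 2)) / 4 +
      Complex.I * (E * (b₁ * c₁ * conj b₂) - conj E * (b₂ * conj b₁ * conj c₁)) / 8) * hI2
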